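/- Let B be a finite length Λ-module and a ∈ B with height sequence having gaps exactly after m_{i₁} > ⋯ > m_{i_s}; set ℓ_j = m_{i_j} − i_j and k_j = m_{i_j} + 1 − ℓ_j. Then the End(B)-submodule generated by a equals Σ_{j=1}^s (rad^{ℓ_j} B ∩ soc^{k_j} B) = Σ_{j=1}^s (p^{ℓ_j} B ∩ ann_B(p^{k_j})). -/

import Mathlib

set_option linter.unusedSectionVars false
set_option maxHeartbeats 1000000
open DirectSum Pointwise

/-- `b` lies in `p^m B`, i.e. the height of `b` is at least `m`. -/
def inPow {Λ B : Type} [CommRing Λ] [AddCommGroup B] [Module Λ B]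
    (p : Λ) (m : ℕ) (b : B) : Prop := ∃ c, b = p ^ m • c

/-- The height of `b` is exactly `m`: `b ∈ p^m B \ p^{m+1} B`. -/
def heightIs {Λ B : Type} [CommRing Λ] [AddCommGroup B] [Module Λ B]
    (p : Λ) (b : B) (m : ℕ) : Prop := inPow p m b ∧ ¬ inPow p (m + 1) b

section Aux

variable {Λ : Type} [CommRing Λ] [IsDomain Λ] [IsDiscreteValuationRing Λ] {p : Λ}
variable {B : Type} [AddCommGroup B] [Module Λ B]

lemma inPow_mono {k M : ℕ} (h : k ≤ M) {b : B} (hb : inPow p M b) : inPow p k b := by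
  obtain ⟨c, rfl⟩ := hb
  exact ⟨p ^ (M - k) • c, by rw [smul_smul, ← pow_add, Nat.add_sub_cancel' h]⟩

lemma le_of_pow_dvd (hp : Irreducible p) {e N : ℕ} {u : Λ} (hu : IsUnit u)
    (h : (p : Λ) ^ e ∣ p ^ N * u) : e ≤ N := by
  by_contra hlt
  push_neg at hlt
  obtain ⟨t, ht⟩ := h
  have hpn : (p : Λ) ^ N ≠ 0 := pow_ne_zero _ hp.ne_zero
  have hu' : u = p ^ (e - N) * t := by
    apply mul_left_cancel₀ hpn
    rw [ht, ← mul_assoc, ← pow_add]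
    congr 2
    omega
  have hdvd : p ∣ u := by
    rw [hu']
    exact Dvd.dvd.mul_right (dvd_pow_self p (by omega : e - N ≠ 0)) t
  exact hp.not_isUnit (isUnit_of_dvd_unit hdvd hu)

lemma isUnit_of_not_dvd (hp : Irreducible p) {u : Λ} (h : ¬ p ∣ u) : IsUnit u := by
  have hu0 : u ≠ 0 := by rintro rfl; exact h (dvd_zero p)
  obtain ⟨k, w, hw⟩ := IsDiscreteValuationRing.eq_unit_mul_pow_irreducible hu0 hp
  match k, hw with
  | 0, hw => rw [hw]; simpa using w.isUnit
  | (k+1), hw =>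
    exact absurd ⟨(w : Λ) * p ^ k, by rw [hw, pow_succ]; ring⟩ h

lemma exists_decomp (hp : Irreducible p) [Module.Finite Λ B] (htor : Module.IsTorsion Λ B) :
    ∃ (d : ℕ) (e : Fin d → ℕ), Nonempty (B ≃ₗ[Λ] ⨁ i : Fin d, Λ ⧸ (Λ ∙ p ^ e i)) := by
  classical
  have htor' : Module.IsTorsion' B (Submonoid.powers p) := by
    intro x
    obtain ⟨r, hr⟩ := @htor x
    have hr0 : (r : Λ) ≠ 0 := nonZeroDivisors.ne_zero r.2
    obtain ⟨k, u, hku⟩ := IsDiscreteValuationRing.eq_unit_mul_pow_irreducible hr0 hp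
    refine ⟨⟨p ^ k, ⟨k, rfl⟩⟩, ?_⟩
    have hpk : (p : Λ) ^ k = ((u⁻¹ : Λˣ) : Λ) * r := by
      rw [hku, ← mul_assoc]; simp
    show (p : Λ) ^ k • x = 0
    rw [hpk, mul_smul, show (r : Λ) • x = 0 from hr, smul_zero]
  exact Module.torsion_by_prime_power_decomposition hp htor'

lemma exists_endo (hp : Irreducible p) [Module.Finite Λ B] (htor : Module.IsTorsion Λ B)
    {a c : B} {i ℓ : ℕ} (h1 : heightIs p (p ^ i • a) (ℓ + i))
    (h2 : p ^ (ℓ + i + 1) • c = 0) :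
    ∃ f : B →ₗ[Λ] B, f a = p ^ ℓ • c := by
  classical
  obtain ⟨d, e, ⟨φ⟩⟩ := exists_decomp hp htor
  set M := ℓ + i with hM
  obtain ⟨⟨c₀, hc₀⟩, hnot⟩ := h1
  -- find bad component
  have hnotD : ¬ ∀ j : Fin d, ∃ w, p ^ i • ((φ a) j) = p ^ (M + 1) • w := by
    intro hall
    choose w hw using hall
    apply hnot
    set W : ⨁ i : Fin d, Λ ⧸ (Λ ∙ p ^ e i) := DFinsupp.equivFunOnFintype.symm w with hW
    refine ⟨φ.symm W, ?_⟩
    apply φ.injective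
    rw [map_smul, map_smul, φ.apply_symm_apply]
    refine DFinsupp.ext fun j => ?_
    have hWj : W j = w j := by
      rw [hW]; exact congrFun (DFinsupp.equivFunOnFintype.right_inv w) j
    simp only [DirectSum.smul_apply, hWj, ← hw]
  push_neg at hnotD
  obtain ⟨j, hj⟩ := hnotD
  obtain ⟨r, hr⟩ := Submodule.Quotient.mk_surjective _ ((φ a) j)
  -- the positive information at component j
  have h1j : p ^ i • ((φ a) j) = p ^ M • ((φ c₀) j) := by
    have : φ (p ^ i • a) = p ^ M • φ c₀ := by rw [hc₀, map_smul]
    rw [map_smul] at this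
    have h := congrArg (fun z : ⨁ i : Fin d, Λ ⧸ (Λ ∙ p ^ e i) => z j) this
    simpa only [DirectSum.smul_apply] using h
  obtain ⟨w', hw'⟩ := Submodule.Quotient.mk_surjective _ ((φ c₀) j)
  have hex : ∃ w t : Λ, p ^ i * r = p ^ M * w + t * p ^ e j := by
    rw [← hr, ← hw'] at h1j
    rw [show p ^ i • (Submodule.Quotient.mk r : Λ ⧸ (Λ ∙ p ^ e j)) =
      Submodule.Quotient.mk (p ^ i * r) from rfl] at h1j
    rw [show p ^ M • (Submodule.Quotient.mk w' : Λ ⧸ (Λ ∙ p ^ e j)) =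
      Submodule.Quotient.mk (p ^ M * w') from rfl] at h1j
    rw [Submodule.Quotient.eq] at h1j
    obtain ⟨t, ht⟩ := Submodule.mem_span_singleton.mp h1j
    rw [smul_eq_mul] at ht
    exact ⟨w', t, by linear_combination -ht⟩
  have hnex : ¬ ∃ w t : Λ, p ^ i * r = p ^ (M + 1) * w + t * p ^ e j := by
    rintro ⟨w, t, hw⟩
    apply hj (Submodule.Quotient.mk w)
    rw [← hr]
    rw [show p ^ i • (Submodule.Quotient.mk r : Λ ⧸ (Λ ∙ p ^ e j)) =
      Submodule.Quotient.mk (p ^ i * r) from rfl]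
    rw [show p ^ (M+1) • (Submodule.Quotient.mk w : Λ ⧸ (Λ ∙ p ^ e j)) =
      Submodule.Quotient.mk (p ^ (M+1) * w) from rfl]
    rw [Submodule.Quotient.eq]
    refine Submodule.mem_span_singleton.mpr ⟨t, ?_⟩
    rw [smul_eq_mul]
    linear_combination -hw
  -- arithmetic: M + 1 ≤ e j
  have heM : M + 1 ≤ e j := by
    by_contra h'
    push_neg at h'
    obtain ⟨w, t, hw⟩ := hex
    apply hnex
    refine ⟨0, p ^ (M - e j) * w + t, ?_⟩
    have hsplit : (p : Λ) ^ M = p ^ (M - e j) * p ^ e j := by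
      rw [← pow_add]; congr 1; omega
    rw [hw, hsplit]; ring
  have hdvd : (p : Λ) ^ M ∣ p ^ i * r := by
    obtain ⟨w, t, hw⟩ := hex
    refine ⟨w + t * p ^ (e j - M), ?_⟩
    have hsplit : (p : Λ) ^ e j = p ^ M * p ^ (e j - M) := by
      rw [← pow_add]; congr 1; omega
    rw [hw, hsplit]; ring
  have hndvd : ¬ (p : Λ) ^ (M + 1) ∣ p ^ i * r := by
    rintro ⟨s, hs⟩
    exact hnex ⟨s, 0, by rw [hs]; ring⟩
  obtain ⟨s, hs⟩ := hdvd
  have hr2 : r = p ^ ℓ * s := by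
    apply mul_left_cancel₀ (pow_ne_zero i hp.ne_zero)
    rw [hs, hM]; ring
  have hps : ¬ (p : Λ) ∣ s := by
    rintro ⟨t, ht⟩
    exact hndvd ⟨t, by rw [hs, ht, pow_succ]; ring⟩
  obtain ⟨u, rfl⟩ := isUnit_of_not_dvd hp hps
  -- build the endomorphism
  set y : B := ((u⁻¹ : Λˣ) : Λ) • c with hy
  have hyz : p ^ e j • y = 0 := by
    have hc : p ^ e j • c = 0 := by
      have hej : e j = (e j - (ℓ + i + 1)) + (ℓ + i + 1) := by omega
      rw [hej, pow_add, mul_smul, h2, smul_zero]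
    rw [hy, smul_comm, hc, smul_zero]
  set g0 : Λ →ₗ[Λ] B := LinearMap.toSpanSingleton Λ B y with hg0
  have hker : (Λ ∙ p ^ e j) ≤ LinearMap.ker g0 := by
    rw [Submodule.span_le, Set.singleton_subset_iff]
    show g0 (p ^ e j) = 0
    rw [hg0, LinearMap.toSpanSingleton_apply, hyz]
  refine ⟨(Submodule.liftQ _ g0 hker) ∘ₗ
    (DirectSum.component Λ (Fin d) _ j) ∘ₗ φ.toLinearMap, ?_⟩
  show Submodule.liftQ _ g0 hker ((φ a) j) = p ^ ℓ • c
  rw [← hr, Submodule.liftQ_apply, hg0, LinearMap.toSpanSingleton_apply, hr2]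
  rw [hy, smul_smul, mul_assoc]
  rw [show ((u : Λ)) * ((u⁻¹ : Λˣ) : Λ) = 1 from u.mul_inv, mul_one]
lemma height_step {a : B} {n : ℕ} {m : ℕ → ℕ}
    (hgt : ∀ i ≤ n, heightIs p (p ^ i • a) (m i)) {t : ℕ} (ht : t < n) :
    m t + 1 ≤ m (t + 1) := by
  obtain ⟨⟨c, hc⟩, -⟩ := hgt t (le_of_lt ht)
  obtain ⟨-, hnot⟩ := hgt (t + 1) ht
  by_contra h
  push_neg at h
  apply hnot
  apply inPow_mono (by omega : m (t + 1) + 1 ≤ m t + 1)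
  refine ⟨c, ?_⟩
  calc p ^ (t + 1) • a = p • p ^ t • a := by rw [pow_succ', mul_smul]
  _ = p • p ^ (m t) • c := by rw [hc]
  _ = p ^ (m t + 1) • c := by rw [smul_smul, ← pow_succ']

lemma height_ge {a : B} {n : ℕ} {m : ℕ → ℕ}
    (hgt : ∀ i ≤ n, heightIs p (p ^ i • a) (m i)) :
    ∀ t ≤ n, t ≤ m t := by
  intro t
  induction t with
  | zero => omega
  | succ k ih =>
    intro h
    have h1 := height_step hgt (show k < n by omega)
    have h2 := ih (by omega)
    omega

lemma mem_decomp (hp : Irreducible p) [Module.Finite Λ B] (htor : Module.IsTorsion Λ B)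
    {a : B} {n s : ℕ} {m : ℕ → ℕ}
    (hgt : ∀ i ≤ n, heightIs p (p ^ i • a) (m i))
    (hzero : p ^ (n + 1) • a = 0)
    {idx : Fin s → ℕ} (hle : ∀ j, idx j ≤ n)
    (hgaps : ∀ ℓ ≤ n, (ℓ = n ∨ m ℓ + 1 < m (ℓ + 1)) ↔ ∃ j, idx j = ℓ) :
    a ∈ ⨆ j : Fin s,
        (Ideal.span {p ^ (m (idx j) - idx j)} • (⊤ : Submodule Λ B) ⊓
          Submodule.torsionBy Λ B (p ^ (m (idx j) + 1 - (m (idx j) - idx j)))) := by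
  classical
  obtain ⟨d, e, ⟨φ⟩⟩ := exists_decomp hp htor
  set ψ : ∀ j : Fin d, (Λ ⧸ (Λ ∙ p ^ e j)) →ₗ[Λ] B :=
    fun j => φ.symm.toLinearMap ∘ₗ DirectSum.lof Λ (Fin d) (fun i => Λ ⧸ (Λ ∙ p ^ e i)) j with hψ
  have comp_smul : ∀ (k : ℕ) (x : B) (jj : Fin d),
      p ^ k • ((φ x) jj) = (φ (p ^ k • x)) jj := by
    intro k x jj
    rw [map_smul]
    exact (DirectSum.smul_apply _ _ _).symm
  have ha : a = ∑ j : Fin d, ψ j ((φ a) j) := by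
    have : ∀ j : Fin d, ψ j ((φ a) j) = φ.symm (DirectSum.of _ j ((φ a) j)) := by
      intro j
      rw [hψ]
      simp [DirectSum.lof_eq_of]
    simp_rw [this]
    rw [← map_sum, DirectSum.sum_univ_of, φ.symm_apply_apply]
  rw [ha]
  apply Submodule.sum_mem
  intro j _
  by_cases hq : (φ a) j = 0
  · rw [hq, map_zero]; exact Submodule.zero_mem _
  obtain ⟨r, hr⟩ := Submodule.Quotient.mk_surjective _ ((φ a) j)
  have hnd : ¬ (p : Λ) ^ e j ∣ r := by
    rintro ⟨t, ht⟩
    apply hq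
    rw [← hr, Submodule.Quotient.mk_eq_zero]
    exact Submodule.mem_span_singleton.mpr ⟨t, by rw [ht, smul_eq_mul]; ring⟩
  have hr0 : r ≠ 0 := by rintro rfl; exact hnd (dvd_zero _)
  obtain ⟨v, u, hvu⟩ := IsDiscreteValuationRing.eq_unit_mul_pow_irreducible hr0 hp
  have hve : v < e j := by
    by_contra h
    push_neg at h
    exact hnd (by rw [hvu]; exact Dvd.dvd.mul_left (pow_dvd_pow p h) _)
  set i0 := e j - 1 - v with hi0
  have hi0e : v + i0 + 1 = e j := by omega
  -- i0 ≤ n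
  have hz : p ^ (n + 1) • ((φ a) j) = 0 := by
    rw [comp_smul, hzero, map_zero]
    rfl
  have hi0n : i0 ≤ n := by
    rw [← hr,
      show p ^ (n+1) • (Submodule.Quotient.mk r : Λ ⧸ (Λ ∙ p ^ e j)) =
        Submodule.Quotient.mk (p ^ (n+1) * r) from rfl,
      Submodule.Quotient.mk_eq_zero] at hz
    obtain ⟨t, ht⟩ := Submodule.mem_span_singleton.mp hz
    rw [smul_eq_mul] at ht
    have hdv : (p : Λ) ^ e j ∣ p ^ (n + 1 + v) * u := by
      refine ⟨t, ?_⟩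
      rw [pow_add, pow_add]
      linear_combination -ht - p ^ (n+1) * hvu
    have := le_of_pow_dvd hp u.isUnit hdv
    omega
  -- m i0 ≤ v + i0
  obtain ⟨⟨c₀, hc₀⟩, -⟩ := hgt i0 hi0n
  have hkey : p ^ i0 • ((φ a) j) = p ^ (m i0) • ((φ c₀) j) := by
    rw [comp_smul, comp_smul, hc₀]
  have hmi0 : m i0 ≤ v + i0 := by
    by_contra h
    push_neg at h
    obtain ⟨w', hw'⟩ := Submodule.Quotient.mk_surjective _ ((φ c₀) j)
    rw [← hr, ← hw',
      show p ^ i0 • (Submodule.Quotient.mk r : Λ ⧸ (Λ ∙ p ^ e j)) =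
        Submodule.Quotient.mk (p ^ i0 * r) from rfl,
      show p ^ (m i0) • (Submodule.Quotient.mk w' : Λ ⧸ (Λ ∙ p ^ e j)) =
        Submodule.Quotient.mk (p ^ (m i0) * w') from rfl,
      Submodule.Quotient.eq] at hkey
    obtain ⟨t, ht⟩ := Submodule.mem_span_singleton.mp hkey
    rw [smul_eq_mul] at ht
    -- ht : t * p ^ e j = p ^ i0 * r - p ^ (m i0) * w'
    have hsplit : (p : Λ) ^ (m i0) = p ^ (m i0 - e j) * p ^ e j := by
      rw [← pow_add]; congr 1; omega
    have hdv : (p : Λ) ^ e j ∣ p ^ (i0 + v) * u := by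
      refine ⟨p ^ (m i0 - e j) * w' + t, ?_⟩
      rw [pow_add]
      linear_combination -ht - p ^ i0 * hvu + w' * hsplit
    have := le_of_pow_dvd hp u.isUnit hdv
    omega
  -- the first gap index ≥ i0
  have hex : ∃ g, i0 ≤ g ∧ ∃ t : Fin s, idx t = g :=
    ⟨n, hi0n, (hgaps n le_rfl).mp (Or.inl rfl)⟩
  set g := Nat.find hex with hgdef
  obtain ⟨hgi0, t0, ht0⟩ := Nat.find_spec hex
  have hgn : g ≤ n := Nat.find_le ⟨hi0n, (hgaps n le_rfl).mp (Or.inl rfl)⟩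
  have hchain : ∀ dt, i0 + dt ≤ g → m (i0 + dt) = m i0 + dt := by
    intro dt
    induction dt with
    | zero => simp
    | succ k ih =>
      intro hk
      have h1 : i0 + k < g := by omega
      have hnotgap : ¬ ∃ t : Fin s, idx t = i0 + k := fun h =>
        Nat.find_min hex h1 ⟨by omega, h⟩
      have hng : ¬ ((i0 + k) = n ∨ m (i0 + k) + 1 < m (i0 + k + 1)) := fun h =>
        hnotgap ((hgaps _ (by omega)).mp h)
      push_neg at hng
      have hstep := height_step hgt (show i0 + k < n by omega)
      have hih := ih (by omega)
      have he1 : i0 + (k + 1) = i0 + k + 1 := rfl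
      rw [he1]
      omega
  have hmg : m g = m i0 + (g - i0) := by
    have := hchain (g - i0) (by omega)
    rwa [show i0 + (g - i0) = g from by omega] at this
  have hmi0ge : i0 ≤ m i0 := height_ge hgt i0 hi0n
  apply Submodule.mem_iSup_of_mem t0
  rw [ht0]
  have hl : m g - g ≤ v := by omega
  have hk : m g + 1 - (m g - g) = g + 1 := by omega
  rw [hk]
  constructor
  · -- smul part
    have hval : ψ j ((φ a) j) =
        p ^ (m g - g) • (p ^ (v - (m g - g)) • ψ j (Submodule.Quotient.mk (u : Λ))) := by
      rw [smul_smul, ← pow_add, show (m g - g) + (v - (m g - g)) = v from by omega, ← map_smul]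
      congr 1
      rw [← hr, hvu,
        show p ^ v • (Submodule.Quotient.mk (u : Λ) : Λ ⧸ (Λ ∙ p ^ e j)) =
          Submodule.Quotient.mk (p ^ v * (u : Λ)) from rfl]
      exact congrArg _ (mul_comm _ _)
    rw [hval]
    exact Submodule.smul_mem_smul (Submodule.mem_span_singleton_self _) Submodule.mem_top
  · -- torsion part
    show p ^ (g + 1) • (ψ j) ((φ a) j) = 0
    rw [← map_smul, ← hr,
      show p ^ (g+1) • (Submodule.Quotient.mk r : Λ ⧸ (Λ ∙ p ^ e j)) =
        Submodule.Quotient.mk (p ^ (g+1) * r) from rfl]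
    have : (Submodule.Quotient.mk (p ^ (g+1) * r) : Λ ⧸ (Λ ∙ p ^ e j)) = 0 := by
      rw [Submodule.Quotient.mk_eq_zero]
      refine Submodule.mem_span_singleton.mpr ⟨(u : Λ) * p ^ (g + 1 + v - e j), ?_⟩
      rw [smul_eq_mul]
      have hsplit : (p : Λ) ^ (g + 1 + v - e j) * p ^ e j = p ^ (g + 1) * p ^ v := by
        rw [← pow_add, ← pow_add]; congr 1; omega
      linear_combination (u : Λ) * hsplit - p ^ (g+1) * hvu
    rw [this, map_zero]
end Aux

theorem stmt16 (Λ : Type) [CommRing Λ] [IsDomain Λ] [IsDiscreteValuationRing Λ]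
    (p : Λ) (hp : Irreducible p)
    (B : Type) [AddCommGroup B] [Module Λ B] [Module.Finite Λ B]
    (htor : Module.IsTorsion Λ B)
    (a : B) (n s : ℕ) (m : ℕ → ℕ)
    (hgt : ∀ i ≤ n, heightIs p (p ^ i • a) (m i))
    (hzero : p ^ (n + 1) • a = 0)
    (idx : Fin s → ℕ) (hanti : StrictAnti idx) (hle : ∀ j, idx j ≤ n)
    (hgaps : ∀ ℓ ≤ n, (ℓ = n ∨ m ℓ + 1 < m (ℓ + 1)) ↔ ∃ j, idx j = ℓ) :
    sInf {N : Submodule Λ B | a ∈ N ∧ ∀ f : B →ₗ[Λ] B, N.map f ≤ N} =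
      ⨆ j : Fin s,
        (Ideal.span {p ^ (m (idx j) - idx j)} • (⊤ : Submodule Λ B) ⊓
          Submodule.torsionBy Λ B (p ^ (m (idx j) + 1 - (m (idx j) - idx j)))) := by
  classical
  have hge : ∀ t ≤ n, t ≤ m t := height_ge hgt
  apply le_antisymm
  · -- sInf ≤ sup : the sup contains a and is fully invariant
    apply sInf_le
    refine ⟨mem_decomp hp htor hgt hzero hle hgaps, ?_⟩
    intro f
    rw [Submodule.map_iSup]
    refine iSup_mono fun j => ?_
    rintro y hy
    rw [Submodule.mem_map] at hy
    obtain ⟨x, ⟨hx1, hx2⟩, rfl⟩ := hy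
    refine ⟨?_, ?_⟩
    · rw [Submodule.ideal_span_singleton_smul] at hx1 ⊢
      obtain ⟨c, -, rfl⟩ := hx1
      show f (p ^ (m (idx j) - idx j) • c) ∈ (p ^ (m (idx j) - idx j) • ⊤ : Submodule Λ B)
      rw [map_smul]
      exact Submodule.smul_mem_pointwise_smul _ _ _ Submodule.mem_top
    · show p ^ (m (idx j) + 1 - (m (idx j) - idx j)) • f x = 0
      have hx2' : p ^ (m (idx j) + 1 - (m (idx j) - idx j)) • x = 0 := hx2
      rw [← map_smul, hx2', map_zero]
  · -- sup ≤ sInf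
    apply le_sInf
    rintro N ⟨haN, hN⟩
    refine iSup_le fun j => ?_
    rintro x ⟨hx1, hx2⟩
    rw [Submodule.ideal_span_singleton_smul] at hx1
    obtain ⟨c, -, rfl⟩ := hx1
    have hjge := hge (idx j) (hle j)
    have hx2' : p ^ (m (idx j) + 1 - (m (idx j) - idx j)) •
        p ^ (m (idx j) - idx j) • c = 0 := hx2
    rw [smul_smul, ← pow_add] at hx2'
    have h2 : p ^ ((m (idx j) - idx j) + idx j + 1) • c = 0 := by
      rw [show (m (idx j) - idx j) + idx j + 1 =
        (m (idx j) + 1 - (m (idx j) - idx j)) + (m (idx j) - idx j) from by omega]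
      exact hx2'
    have h1 : heightIs p (p ^ (idx j) • a) ((m (idx j) - idx j) + idx j) := by
      rw [show (m (idx j) - idx j) + idx j = m (idx j) from by omega]
      exact hgt (idx j) (hle j)
    obtain ⟨f, hf⟩ := exists_endo hp htor h1 h2
    have hfin : p ^ (m (idx j) - idx j) • c ∈ N := hf ▸ hN f (Submodule.mem_map_of_mem haN)
    exact hfin
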